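/- Two-step descent of the cyclic (alternating up/down pulse) zero-shifting scheme: for any W ∈ ℝ^D, let W' := W + Δ·F(W) − Δ·G(W) (up pulse) and W'' := W' − Δ·F(W') − Δ·G(W') (down pulse). Then φ(W'') ≤ φ(W) − Δ‖G(W)‖² − Δ‖G(W')‖² + 3·L_q·Δ²·q_max². -/

import Mathlib

noncomputable section

open scoped BigOperators

open InnerProductSpace

lemma descent_step {D : ℕ} (Lq : ℝ) (hLq : 0 ≤ Lq)
    (G : EuclideanSpace ℝ (Fin D) → EuclideanSpace ℝ (Fin D))
    (φ : EuclideanSpace ℝ (Fin D) → ℝ)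
    (hgrad : ∀ W, HasGradientAt φ (G W) W)
    (hgradLip : ∀ U V, ‖G U - G V‖ ≤ Lq * ‖U - V‖)
    (X Y : EuclideanSpace ℝ (Fin D)) :
    φ Y ≤ φ X + inner ℝ (G X) (Y - X) + Lq * ‖Y - X‖ ^ 2 := by
  set s := Metric.closedBall X ‖Y - X‖ with hs
  have hXs : X ∈ s := Metric.mem_closedBall_self (norm_nonneg _)
  have hYs : Y ∈ s := by
    simp [hs, Metric.mem_closedBall, dist_eq_norm]
  have key := Convex.norm_image_sub_le_of_norm_hasFDerivWithin_le'
    (f := φ) (f' := fun z => toDual ℝ _ (G z)) (φ := toDual ℝ _ (G X))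
    (C := Lq * ‖Y - X‖) (s := s)
    (fun z _ => ((hgrad z).hasFDerivAt).hasFDerivWithinAt)
    (fun z hz => by
      rw [← map_sub, (toDual ℝ _).norm_map]
      calc ‖G z - G X‖ ≤ Lq * ‖z - X‖ := hgradLip z X
        _ ≤ Lq * ‖Y - X‖ := by
          apply mul_le_mul_of_nonneg_left _ hLq
          simpa [hs, dist_eq_norm] using hz)
    (convex_closedBall X ‖Y - X‖) hXs hYs
  rw [toDual_apply_apply] at key
  have h1 : φ Y - φ X - inner ℝ (G X) (Y - X) ≤ Lq * ‖Y - X‖ * ‖Y - X‖ :=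
    le_trans (le_abs_self _) key
  nlinarith [sq_nonneg ‖Y - X‖]


set_option maxHeartbeats 1600000 in
/-- Two-step descent of the cyclic (alternating up/down pulse) zero-shifting
scheme: an up pulse followed by a down pulse decreases `φ` by
`Δ(‖G(W)‖² + ‖G(W')‖²)` up to a `3 L_q Δ² q_max²` error term. -/
theorem cyclic_zero_shifting_two_step_descent
    (D : ℕ) (hD : 1 ≤ D) (Δ qmax Lq : ℝ) (hΔ : 0 < Δ) (hq : 0 < qmax) (hLq : 0 < Lq)
    (Qp Qm : EuclideanSpace ℝ (Fin D) → EuclideanSpace ℝ (Fin D))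
    (hQpLip : ∀ U V, ‖Qp U - Qp V‖ ≤ Lq * ‖U - V‖)
    (hQmLip : ∀ U V, ‖Qm U - Qm V‖ ≤ Lq * ‖U - V‖)
    (hQp : ∀ W, ‖Qp W‖ ≤ qmax) (hQm : ∀ W, ‖Qm W‖ ≤ qmax)
    (F G : EuclideanSpace ℝ (Fin D) → EuclideanSpace ℝ (Fin D))
    (hF : ∀ W, F W = (1 / 2 : ℝ) • (Qm W + Qp W))
    (hG : ∀ W, G W = (1 / 2 : ℝ) • (Qm W - Qp W))
    (φ : EuclideanSpace ℝ (Fin D) → ℝ)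
    (hgrad : ∀ W, HasGradientAt φ (G W) W)
    (hgradLip : ∀ U V, ‖G U - G V‖ ≤ Lq * ‖U - V‖)
    (W W' W'' : EuclideanSpace ℝ (Fin D))
    (hW' : W' = W + Δ • F W - Δ • G W)
    (hW'' : W'' = W' - Δ • F W' - Δ • G W') :
    φ W'' ≤ φ W - Δ * ‖G W‖ ^ 2 - Δ * ‖G W'‖ ^ 2 + 3 * Lq * Δ ^ 2 * qmax ^ 2 := by
  have e1 : W' - W = Δ • Qp W := by rw [hW', hF W, hG W]; module
  have e2 : W'' - W' = -(Δ • Qm W') := by rw [hW'', hF W', hG W']; module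
  have n1 : ‖W' - W‖ = Δ * ‖Qp W‖ := by
    rw [e1, norm_smul, Real.norm_eq_abs, abs_of_pos hΔ]
  have n2 : ‖W'' - W'‖ = Δ * ‖Qm W'‖ := by
    rw [e2, norm_neg, norm_smul, Real.norm_eq_abs, abs_of_pos hΔ]
  have gW : ‖G W‖ ^ 2
      = (‖Qm W‖ ^ 2 - 2 * inner ℝ (Qm W) (Qp W) + ‖Qp W‖ ^ 2) / 4 := by
    rw [hG W, norm_smul, mul_pow, ← norm_sub_sq_real]
    norm_num
    ring
  have gW' : ‖G W'‖ ^ 2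
      = (‖Qm W'‖ ^ 2 - 2 * inner ℝ (Qm W') (Qp W') + ‖Qp W'‖ ^ 2) / 4 := by
    rw [hG W', norm_smul, mul_pow, ← norm_sub_sq_real]
    norm_num
    ring
  have i1 : (inner ℝ (G W) (W' - W) : ℝ)
      = Δ * ((inner ℝ (Qm W) (Qp W) : ℝ) - ‖Qp W‖ ^ 2) / 2 := by
    rw [e1, hG W, real_inner_smul_left, real_inner_smul_right, inner_sub_left,
      real_inner_self_eq_norm_sq]
    ring
  have i2 : (inner ℝ (G W') (W'' - W') : ℝ)
      = -(Δ * (‖Qm W'‖ ^ 2 - (inner ℝ (Qm W') (Qp W') : ℝ)) / 2) := by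
    rw [e2, hG W', inner_neg_right, real_inner_smul_left, real_inner_smul_right,
      inner_sub_left, real_inner_self_eq_norm_sq, real_inner_comm (Qp W') (Qm W')]
    ring
  have s1 := descent_step Lq hLq.le G φ hgrad hgradLip W W'
  have s2 := descent_step Lq hLq.le G φ hgrad hgradLip W' W''
  rw [i1, n1] at s1
  rw [i2, n2] at s2
  -- cross term bound
  have hWW' : ‖W - W'‖ ≤ Δ * qmax := by
    rw [norm_sub_rev, n1]
    exact mul_le_mul_of_nonneg_left (hQp W) hΔ.le
  have d1 : |‖Qm W‖ - ‖Qm W'‖| ≤ Lq * (Δ * qmax) :=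
    le_trans (abs_norm_sub_norm_le _ _) (le_trans (hQmLip W W')
      (mul_le_mul_of_nonneg_left hWW' hLq.le))
  have d2 : |‖Qp W'‖ - ‖Qp W‖| ≤ Lq * (Δ * qmax) :=
    le_trans (abs_norm_sub_norm_le _ _) (le_trans (hQpLip W' W) (by
      rw [norm_sub_rev]
      exact mul_le_mul_of_nonneg_left hWW' hLq.le))
  obtain ⟨d1l, d1r⟩ := abs_le.mp d1
  obtain ⟨d2l, d2r⟩ := abs_le.mp d2
  have cross : ‖Qm W‖ ^ 2 - ‖Qm W'‖ ^ 2 + ‖Qp W'‖ ^ 2 - ‖Qp W‖ ^ 2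
      ≤ 4 * Lq * Δ * qmax ^ 2 := by
    nlinarith [hQm W, hQm W', hQp W, hQp W', norm_nonneg (Qm W), norm_nonneg (Qm W'),
      norm_nonneg (Qp W), norm_nonneg (Qp W')]
  have crossΔ : Δ * (‖Qm W‖ ^ 2 - ‖Qm W'‖ ^ 2 + ‖Qp W'‖ ^ 2 - ‖Qp W‖ ^ 2)
      ≤ Δ * (4 * Lq * Δ * qmax ^ 2) := mul_le_mul_of_nonneg_left cross hΔ.le
  have hbb : ‖Qp W‖ ^ 2 ≤ qmax ^ 2 :=
    pow_le_pow_left₀ (norm_nonneg _) (hQp W) 2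
  have haa : ‖Qm W'‖ ^ 2 ≤ qmax ^ 2 :=
    pow_le_pow_left₀ (norm_nonneg _) (hQm W') 2
  have hb2 : Lq * (Δ * ‖Qp W‖) ^ 2 ≤ Lq * Δ ^ 2 * qmax ^ 2 := by
    calc Lq * (Δ * ‖Qp W‖) ^ 2 = Lq * Δ ^ 2 * ‖Qp W‖ ^ 2 := by ring
      _ ≤ Lq * Δ ^ 2 * qmax ^ 2 := by
          exact mul_le_mul_of_nonneg_left hbb (by positivity)
  have ha2 : Lq * (Δ * ‖Qm W'‖) ^ 2 ≤ Lq * Δ ^ 2 * qmax ^ 2 := by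
    calc Lq * (Δ * ‖Qm W'‖) ^ 2 = Lq * Δ ^ 2 * ‖Qm W'‖ ^ 2 := by ring
      _ ≤ Lq * Δ ^ 2 * qmax ^ 2 := by
          exact mul_le_mul_of_nonneg_left haa (by positivity)
  have hΔg : Δ * ‖G W‖ ^ 2
      = Δ * ((‖Qm W‖ ^ 2 - 2 * inner ℝ (Qm W) (Qp W) + ‖Qp W‖ ^ 2) / 4) := by rw [gW]
  have hΔg' : Δ * ‖G W'‖ ^ 2
      = Δ * ((‖Qm W'‖ ^ 2 - 2 * inner ℝ (Qm W') (Qp W') + ‖Qp W'‖ ^ 2) / 4) := by rw [gW']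
  linarith only [s1, s2, crossΔ, hb2, ha2, hΔg, hΔg']
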